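/- Let a₁, a₂, a₃ be positive integers with 3 ≤ a₁ < a₂ < a₃ and gcd(a₁, a₂, a₃) = 1, and let y₀, y₁, z₀, z₁ be nonnegative integers satisfying: (i) 0 ≤ y₁ ≤ y₀ and 0 ≤ z₀ ≤ z₁; (ii) a₁ = y₀·z₀ + y₁·(z₁−z₀); (iii) y₀·a₂ − (z₁−z₀)·a₃ ≡ 0 (mod a₁) and y₀·a₂ > (z₁−z₀)·a₃; (iv) y₁·a₂ + z₀·a₃ ≡ 0 (mod a₁). Let R be the staircase region of pairs (y, z) of nonnegative integers with either (0 ≤ y ≤ y₀−1 and 0 ≤ z ≤ z₀−1) or (0 ≤ y ≤ y₁−1 and z₀ ≤ z ≤ z₁−1). Then the map (y, z) ↦ (y·a₂ + z·a₃) mod a₁ is a bijection from R onto the set of residue classes modulo a₁; in particular, the a₁ values y·a₂ + z·a₃ for (y, z) ∈ R form a complete residue system modulo a₁. -/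

import Mathlib

set_option maxHeartbeats 1000000

private lemma aux_dvd_of_gcd (a₁ a₂ a₃ : ℕ) (hgcd : Nat.gcd a₁ (Nat.gcd a₂ a₃) = 1)
    (t : ℤ) (h2 : (a₁ : ℤ) ∣ t * a₂) (h3 : (a₁ : ℤ) ∣ t * a₃) : (a₁ : ℤ) ∣ t := by
  have hcop : IsCoprime (a₁ : ℤ) ((Nat.gcd a₂ a₃ : ℕ) : ℤ) :=
    Nat.isCoprime_iff_coprime.mpr hgcd
  have hg : ((Nat.gcd a₂ a₃ : ℕ) : ℤ) = (a₂ : ℤ) * Int.gcdA a₂ a₃ + (a₃ : ℤ) * Int.gcdB a₂ a₃ := by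
    have h := Int.gcd_eq_gcd_ab (a₂ : ℤ) (a₃ : ℤ)
    simpa [Int.gcd_natCast_natCast] using h
  have hdvd : (a₁ : ℤ) ∣ t * ((Nat.gcd a₂ a₃ : ℕ) : ℤ) := by
    rw [hg]
    have := dvd_add (h2.mul_right (Int.gcdA a₂ a₃)) (h3.mul_right (Int.gcdB a₂ a₃))
    convert this using 1
    exacts [rfl, by ring]
  exact hcop.dvd_of_dvd_mul_right hdvd

/-- Staircase structure of the 0-Apéry set: given `3 ≤ a₁ < a₂ < a₃` with
`gcd(a₁, a₂, a₃) = 1` and nonnegative integers `y₀, y₁, z₀, z₁` satisfying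
(i) `y₁ ≤ y₀`, `z₀ ≤ z₁`;
(ii) `a₁ = y₀·z₀ + y₁·(z₁ − z₀)`;
(iii) `a₁ ∣ y₀·a₂ − (z₁ − z₀)·a₃` and `y₀·a₂ > (z₁ − z₀)·a₃`;
(iv) `a₁ ∣ y₁·a₂ + z₀·a₃`;
the map `(y, z) ↦ (y·a₂ + z·a₃) mod a₁` is a bijection from the staircase region `R` onto the
residue classes modulo `a₁`. -/
theorem apery_staircase_bijOn (a₁ a₂ a₃ y₀ y₁ z₀ z₁ : ℕ)
    (ha₁ : 3 ≤ a₁) (h₁₂ : a₁ < a₂) (h₂₃ : a₂ < a₃)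
    (hgcd : Nat.gcd a₁ (Nat.gcd a₂ a₃) = 1)
    (hy : y₁ ≤ y₀) (hz : z₀ ≤ z₁)
    (hii : a₁ = y₀ * z₀ + y₁ * (z₁ - z₀))
    (hiii₁ : (a₁ : ℤ) ∣ (y₀ : ℤ) * a₂ - ((z₁ : ℤ) - z₀) * a₃)
    (hiii₂ : ((z₁ : ℤ) - z₀) * a₃ < (y₀ : ℤ) * a₂)
    (hiv : a₁ ∣ y₁ * a₂ + z₀ * a₃) :
    Set.BijOn (fun p : ℕ × ℕ => ((p.1 * a₂ + p.2 * a₃ : ℕ) : ZMod a₁))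
      {p : ℕ × ℕ | (p.1 < y₀ ∧ p.2 < z₀) ∨ (p.1 < y₁ ∧ z₀ ≤ p.2 ∧ p.2 < z₁)}
      Set.univ := by
  haveI : NeZero a₁ := ⟨by omega⟩
  have ha₁z : (a₁ : ℤ) = (y₀ : ℤ) * z₀ + (y₁ : ℤ) * ((z₁ : ℤ) - z₀) := by
    have h := hii
    zify [hz] at h
    linarith
  have ha₁ne : (a₁ : ℤ) ≠ 0 := by positivity
  have hiv' : (a₁ : ℤ) ∣ (y₁ : ℤ) * a₂ + (z₀ : ℤ) * a₃ := by exact_mod_cast hiv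
  have hinj : Set.InjOn (fun p : ℕ × ℕ => ((p.1 * a₂ + p.2 * a₃ : ℕ) : ZMod a₁))
      {p : ℕ × ℕ | (p.1 < y₀ ∧ p.2 < z₀) ∨ (p.1 < y₁ ∧ z₀ ≤ p.2 ∧ p.2 < z₁)} := by
    rintro ⟨y, z⟩ hp ⟨y', z'⟩ hq hfeq
    simp only [Set.mem_setOf_eq] at hp hq
    have hd : (a₁ : ℤ) ∣ ((y : ℤ) - y') * a₂ + ((z : ℤ) - z') * a₃ := by
      have h1 : ((y * a₂ + z * a₃ : ℕ) : ZMod a₁) = ((y' * a₂ + z' * a₃ : ℕ) : ZMod a₁) := hfeq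
      have h2 := (ZMod.natCast_eq_natCast_iff _ _ _).mp h1
      have h3 := (Nat.modEq_iff_dvd).mp h2
      have h4 := (dvd_neg (α := ℤ)).mpr h3
      have h5 : -(((y' * a₂ + z' * a₃ : ℕ) : ℤ) - ((y * a₂ + z * a₃ : ℕ) : ℤ))
          = ((y : ℤ) - y') * a₂ + ((z : ℤ) - z') * a₃ := by push_cast; ring
      rwa [h5] at h4
    set u : ℤ := (y : ℤ) - y' with hu_def
    set v : ℤ := (z : ℤ) - z' with hv_def
    have h1 : (a₁ : ℤ) ∣ (u * z₀ - v * y₁) := by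
      refine aux_dvd_of_gcd a₁ a₂ a₃ hgcd _ ?_ ?_
      · have := dvd_sub (hd.mul_left (z₀ : ℤ)) (hiv'.mul_left v)
        convert this using 1; exacts [rfl, by ring]
      · have := dvd_add ((dvd_neg.mpr hd).mul_left (y₁ : ℤ)) (hiv'.mul_left u)
        convert this using 1; exacts [rfl, by ring]
    have h2 : (a₁ : ℤ) ∣ (u * ((z₁ : ℤ) - z₀) + v * y₀) := by
      refine aux_dvd_of_gcd a₁ a₂ a₃ hgcd _ ?_ ?_
      · have := dvd_add (hd.mul_left ((z₁ : ℤ) - z₀)) (hiii₁.mul_left v)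
        convert this using 1; exacts [rfl, by ring]
      · have := dvd_sub (hd.mul_left (y₀ : ℤ)) (hiii₁.mul_left u)
        convert this using 1; exacts [rfl, by ring]
    obtain ⟨m, hm⟩ := h1
    obtain ⟨n, hn⟩ := h2
    have hu : u = m * y₀ + n * y₁ := by
      have key : (a₁ : ℤ) * u = (a₁ : ℤ) * (m * y₀ + n * y₁) := by
        linear_combination (y₀ : ℤ) * hm + (y₁ : ℤ) * hn + u * ha₁z
      exact mul_left_cancel₀ ha₁ne key
    have hv : v = n * z₀ - m * ((z₁ : ℤ) - z₀) := by
      have key : (a₁ : ℤ) * v = (a₁ : ℤ) * (n * z₀ - m * ((z₁ : ℤ) - z₀)) := by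
        linear_combination (z₀ : ℤ) * hn - ((z₁ : ℤ) - z₀) * hm + v * ha₁z
      exact mul_left_cancel₀ ha₁ne key
    have hyb : (y : ℤ) < y₀ := by exact_mod_cast (show y < y₀ by omega)
    have hyb' : (y' : ℤ) < y₀ := by exact_mod_cast (show y' < y₀ by omega)
    have hzb : (z : ℤ) < z₁ := by exact_mod_cast (show z < z₁ by omega)
    have hzb' : (z' : ℤ) < z₁ := by exact_mod_cast (show z' < z₁ by omega)
    have hy0 : (0 : ℤ) ≤ y := Int.natCast_nonneg y
    have hy0' : (0 : ℤ) ≤ y' := Int.natCast_nonneg y'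
    have hz0 : (0 : ℤ) ≤ z := Int.natCast_nonneg z
    have hz0' : (0 : ℤ) ≤ z' := Int.natCast_nonneg z'
    have hzw : (z₀ : ℤ) ≤ z₁ := by exact_mod_cast hz
    have hy₁y₀ : (y₁ : ℤ) ≤ y₀ := by exact_mod_cast hy
    have hz₀n : (0 : ℤ) ≤ z₀ := Int.natCast_nonneg z₀
    have hy₁n : (0 : ℤ) ≤ y₁ := Int.natCast_nonneg y₁
    have hy₀n : (0 : ℤ) ≤ y₀ := Int.natCast_nonneg y₀
    have hmn : m = 0 ∧ n = 0 := by
      rcases lt_trichotomy m 0 with hm' | hm' | hm'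
      · rcases le_or_gt n 0 with hn' | hn'
        · exfalso
          have f1 : (0 : ℤ) ≤ (-(m+1)) * y₀ := mul_nonneg (by linarith) hy₀n
          have f2 : (0 : ℤ) ≤ (-n) * y₁ := mul_nonneg (by linarith) hy₁n
          linarith
        · exfalso
          have f1 : (0 : ℤ) ≤ (n-1) * z₀ := mul_nonneg (by linarith) hz₀n
          have f2 : (0 : ℤ) ≤ (-(m+1)) * ((z₁ : ℤ) - z₀) := mul_nonneg (by linarith) (by linarith)
          linarith
      · rcases lt_trichotomy n 0 with hn' | hn' | hn'
        · exfalso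
          subst hm'
          have f1 : (0 : ℤ) ≤ (-(n+1)) * z₀ := mul_nonneg (by linarith) hz₀n
          have hz'big : (z₀ : ℤ) ≤ z' := by linarith
          have hz'n : z₀ ≤ z' := by exact_mod_cast hz'big
          have hy'lt : y' < y₁ := by omega
          have hy'ltz : (y' : ℤ) < y₁ := by exact_mod_cast hy'lt
          have f2 : (0 : ℤ) ≤ (-(n+1)) * y₁ := mul_nonneg (by linarith) hy₁n
          linarith
        · exact ⟨hm', hn'⟩
        · exfalso
          subst hm'
          have f1 : (0 : ℤ) ≤ (n-1) * z₀ := mul_nonneg (by linarith) hz₀n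
          have hzbig : (z₀ : ℤ) ≤ z := by linarith
          have hzn : z₀ ≤ z := by exact_mod_cast hzbig
          have hylt : y < y₁ := by omega
          have hyltz : (y : ℤ) < y₁ := by exact_mod_cast hylt
          have f2 : (0 : ℤ) ≤ (n-1) * y₁ := mul_nonneg (by linarith) hy₁n
          linarith
      · rcases le_or_gt 0 n with hn' | hn'
        · exfalso
          have f1 : (0 : ℤ) ≤ (m-1) * y₀ := mul_nonneg (by linarith) hy₀n
          have f2 : (0 : ℤ) ≤ n * y₁ := mul_nonneg (by linarith) hy₁n
          linarith
        · exfalso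
          have f1 : (0 : ℤ) ≤ (m-1) * ((z₁ : ℤ) - z₀) := mul_nonneg (by linarith) (by linarith)
          have f2 : (0 : ℤ) ≤ (-(n+1)) * z₀ := mul_nonneg (by linarith) hz₀n
          linarith
    obtain ⟨hm0, hn0⟩ := hmn
    have hu0 : u = 0 := by rw [hu, hm0, hn0]; ring
    have hv0 : v = 0 := by rw [hv, hm0, hn0]; ring
    have hyy : y = y' := by omega
    have hzz : z = z' := by omega
    simp [hyy, hzz]
  classical
  set S : Finset (ℕ × ℕ) :=
    (Finset.range y₀ ×ˢ Finset.range z₀) ∪ (Finset.range y₁ ×ˢ Finset.Ico z₀ z₁) with hS_def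
  have hSmem : ∀ p : ℕ × ℕ, p ∈ S ↔
      ((p.1 < y₀ ∧ p.2 < z₀) ∨ (p.1 < y₁ ∧ z₀ ≤ p.2 ∧ p.2 < z₁)) := by
    intro p
    simp [hS_def, Finset.mem_union, Finset.mem_product, Finset.mem_range, Finset.mem_Ico, and_assoc]
  have hdisj : Disjoint (Finset.range y₀ ×ˢ Finset.range z₀)
      (Finset.range y₁ ×ˢ Finset.Ico z₀ z₁) := by
    rw [Finset.disjoint_left]
    rintro ⟨a, b⟩ h1 h2
    simp only [Finset.mem_product, Finset.mem_range, Finset.mem_Ico] at h1 h2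
    omega
  have hScard : S.card = a₁ := by
    rw [hS_def, Finset.card_union_of_disjoint hdisj]
    simp only [Finset.card_product, Finset.card_range, Nat.card_Ico]
    omega
  have hinjS : Set.InjOn (fun p : ℕ × ℕ => ((p.1 * a₂ + p.2 * a₃ : ℕ) : ZMod a₁)) ↑S := by
    intro p hp q hq h
    exact hinj ((hSmem p).mp (Finset.mem_coe.mp hp)) ((hSmem q).mp (Finset.mem_coe.mp hq)) h
  have himg : Finset.image (fun p : ℕ × ℕ => ((p.1 * a₂ + p.2 * a₃ : ℕ) : ZMod a₁)) S
      = Finset.univ := by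
    apply Finset.eq_univ_of_card
    rw [Finset.card_image_of_injOn hinjS, hScard, ZMod.card]
  refine ⟨fun p _ => Set.mem_univ _, hinj, fun c _ => ?_⟩
  have hc : c ∈ Finset.image (fun p : ℕ × ℕ => ((p.1 * a₂ + p.2 * a₃ : ℕ) : ZMod a₁)) S := by
    rw [himg]; exact Finset.mem_univ c
  obtain ⟨p, hpS, hpc⟩ := Finset.mem_image.mp hc
  exact ⟨p, (hSmem p).mp hpS, hpc⟩
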